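/- Let c₁, c₂ be integers with A := c₁ + c₂ > 0. Let X = {(a,b) ∈ ℤ² : (c₁+c₂+a+b)² = 2(c₁²+c₂²+a²+b²) and gcd(c₁,c₂,a,b) = 1}, and consider the equivalence relation on X generated by (a,b) ∼ (b,a) and (a,b) ∼ (a, 2c₁+2c₂+2a−b). Then the number of equivalence classes of X equals the number of pairs (B,C) ∈ ℤ² with B² − 4AC = −4c₁², gcd(A,B,C) = 1, and 0 ≤ B ≤ A. -/

import Mathlib

/-- The set of `(a,b)` such that `(c₁,c₂,a,b)` is a primitive integral Descartes
quadruple. -/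
def X (c₁ c₂ : ℤ) : Set (ℤ × ℤ) :=
  {p | (c₁ + c₂ + p.1 + p.2) ^ 2 = 2 * (c₁ ^ 2 + c₂ ^ 2 + p.1 ^ 2 + p.2 ^ 2) ∧
    Int.gcd (Int.gcd (Int.gcd c₁ c₂ : ℤ) p.1 : ℤ) p.2 = 1}

/-- The generating moves: swapping `a` and `b`, and the Vieta move
`(a,b) ↦ (a, 2c₁+2c₂+2a−b)`. -/
def move (c₁ c₂ : ℤ) : (ℤ × ℤ) → (ℤ × ℤ) → Prop := fun p q =>
  q = (p.2, p.1) ∨ q = (p.1, 2 * c₁ + 2 * c₂ + 2 * p.1 - p.2)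

/-- The equivalence classes of `X` under the equivalence relation generated by
the two moves. -/
def classes (c₁ c₂ : ℤ) : Set (Set (ℤ × ℤ)) :=
  {C | ∃ p ∈ X c₁ c₂, C = {q ∈ X c₁ c₂ | Relation.EqvGen (move c₁ c₂) p q}}

/-! ### Auxiliary gcd lemmas -/

private lemma dvd_g4 {k x y z w : ℤ} (hx : k ∣ x) (hy : k ∣ y) (hz : k ∣ z) (hw : k ∣ w) :
    k ∣ ((Int.gcd (Int.gcd (Int.gcd x y : ℤ) z : ℤ) w : ℤ)) :=
  Int.dvd_coe_gcd (Int.dvd_coe_gcd (Int.dvd_coe_gcd hx hy) hz) hw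

private lemma g4_dvd_x {x y z w : ℤ} :
    ((Int.gcd (Int.gcd (Int.gcd x y : ℤ) z : ℤ) w : ℤ)) ∣ x :=
  ((Int.gcd_dvd_left _ _).trans (Int.gcd_dvd_left _ _)).trans (Int.gcd_dvd_left _ _)

private lemma g4_dvd_y {x y z w : ℤ} :
    ((Int.gcd (Int.gcd (Int.gcd x y : ℤ) z : ℤ) w : ℤ)) ∣ y :=
  ((Int.gcd_dvd_left _ _).trans (Int.gcd_dvd_left _ _)).trans (Int.gcd_dvd_right _ _)

private lemma g4_dvd_z {x y z w : ℤ} :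
    ((Int.gcd (Int.gcd (Int.gcd x y : ℤ) z : ℤ) w : ℤ)) ∣ z :=
  (Int.gcd_dvd_left _ _).trans (Int.gcd_dvd_right _ _)

private lemma g4_dvd_w {x y z w : ℤ} :
    ((Int.gcd (Int.gcd (Int.gcd x y : ℤ) z : ℤ) w : ℤ)) ∣ w :=
  (Int.gcd_dvd_right _ _)

private lemma g3_dvd_x {x y z : ℤ} : ((Int.gcd (Int.gcd x y : ℤ) z : ℤ)) ∣ x :=
  (Int.gcd_dvd_left _ _).trans (Int.gcd_dvd_left _ _)
private lemma g3_dvd_y {x y z : ℤ} : ((Int.gcd (Int.gcd x y : ℤ) z : ℤ)) ∣ y :=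
  (Int.gcd_dvd_left _ _).trans (Int.gcd_dvd_right _ _)
private lemma g3_dvd_z {x y z : ℤ} : ((Int.gcd (Int.gcd x y : ℤ) z : ℤ)) ∣ z :=
  (Int.gcd_dvd_right _ _)

private lemma g4_swap (x y z w : ℤ) :
    Int.gcd (Int.gcd (Int.gcd x y : ℤ) w : ℤ) z =
      Int.gcd (Int.gcd (Int.gcd x y : ℤ) z : ℤ) w := by
  apply Nat.dvd_antisymm <;> rw [← Int.natCast_dvd_natCast] <;>
    exact dvd_g4 g4_dvd_x g4_dvd_y g4_dvd_w g4_dvd_z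

private lemma g4_vieta (x y z w : ℤ) :
    Int.gcd (Int.gcd (Int.gcd x y : ℤ) z : ℤ) (2 * x + 2 * y + 2 * z - w) =
      Int.gcd (Int.gcd (Int.gcd x y : ℤ) z : ℤ) w := by
  apply Nat.dvd_antisymm <;> rw [← Int.natCast_dvd_natCast]
  · refine dvd_g4 g4_dvd_x g4_dvd_y g4_dvd_z ?_
    have h1 : ((Int.gcd (Int.gcd (Int.gcd x y : ℤ) z : ℤ) (2*x+2*y+2*z-w) : ℤ)) ∣
        (2*x + 2*y + 2*z) :=
      dvd_add (dvd_add (g4_dvd_x.mul_left 2) (g4_dvd_y.mul_left 2)) (g4_dvd_z.mul_left 2)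
    have h2 := h1.sub (g4_dvd_w (x := x) (y := y) (z := z) (w := 2*x+2*y+2*z-w))
    have h3 : (2*x+2*y+2*z) - (2*x+2*y+2*z-w) = w := by ring
    rwa [h3] at h2
  · refine dvd_g4 g4_dvd_x g4_dvd_y g4_dvd_z ?_
    exact (dvd_add (dvd_add (g4_dvd_x.mul_left 2) (g4_dvd_y.mul_left 2))
      (g4_dvd_z.mul_left 2)).sub g4_dvd_w

/-! ### The Descartes equation and the moves -/

private lemma descartes_alt {c₁ c₂ a b : ℤ} :
    (c₁ + c₂ + a + b) ^ 2 = 2 * (c₁ ^ 2 + c₂ ^ 2 + a ^ 2 + b ^ 2) ↔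
    (a - b) ^ 2 + (c₁ - c₂) ^ 2 = 2 * (c₁ + c₂) * (a + b) := by
  constructor <;> intro h <;> linear_combination -h

private lemma swap_memX {c₁ c₂ : ℤ} {p : ℤ × ℤ} (hp : p ∈ X c₁ c₂) : (p.2, p.1) ∈ X c₁ c₂ := by
  obtain ⟨h1, h2⟩ := hp
  refine ⟨by linear_combination h1, ?_⟩
  show Int.gcd (Int.gcd (Int.gcd c₁ c₂ : ℤ) p.2 : ℤ) p.1 = 1
  rw [g4_swap]; exact h2

private lemma vieta_memX {c₁ c₂ : ℤ} {p : ℤ × ℤ} (hp : p ∈ X c₁ c₂) :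
    (p.1, 2 * c₁ + 2 * c₂ + 2 * p.1 - p.2) ∈ X c₁ c₂ := by
  obtain ⟨h1, h2⟩ := hp
  refine ⟨by linear_combination h1, ?_⟩
  show Int.gcd (Int.gcd (Int.gcd c₁ c₂ : ℤ) p.1 : ℤ) (2 * c₁ + 2 * c₂ + 2 * p.1 - p.2) = 1
  rw [g4_vieta]; exact h2

private lemma X_inj {c₁ c₂ : ℤ} (hA : 0 < c₁ + c₂) {p q : ℤ × ℤ} (hp : p ∈ X c₁ c₂)
    (hq : q ∈ X c₁ c₂) (h : p.1 - p.2 = q.1 - q.2) : p = q := by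
  have h1 := descartes_alt.mp hp.1
  have h2 := descartes_alt.mp hq.1
  have hsum : 2 * (c₁ + c₂) * (p.1 + p.2) = 2 * (c₁ + c₂) * (q.1 + q.2) := by
    rw [← h1, ← h2, h]
  have hs : p.1 + p.2 = q.1 + q.2 := by
    have hne : 2 * (c₁ + c₂) ≠ 0 := by positivity
    exact mul_left_cancel₀ hne hsum
  have e1 : p.1 = q.1 := by omega
  have e2 : p.2 = q.2 := by omega
  exact Prod.ext e1 e2

/-! ### Reduction theory: every class has a unique reduced representative -/

private lemma reach {c₁ c₂ : ℤ} (hA : 0 < c₁ + c₂) :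
    ∀ n : ℕ, ∀ p ∈ X c₁ c₂, (p.1 - p.2).natAbs ≤ n →
      ∃ q ∈ X c₁ c₂, Relation.EqvGen (move c₁ c₂) p q ∧
        -(c₁ + c₂) ≤ q.1 - q.2 ∧ q.1 - q.2 ≤ 0 := by
  intro n
  induction n with
  | zero =>
    intro p hp h0
    exact ⟨p, hp, Relation.EqvGen.refl p, by omega, by omega⟩
  | succ n ih =>
    intro p hp hn
    by_cases hc1 : -(c₁ + c₂) ≤ p.1 - p.2 ∧ p.1 - p.2 ≤ 0
    · exact ⟨p, hp, Relation.EqvGen.refl p, hc1.1, hc1.2⟩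
    by_cases hc2 : 0 < p.1 - p.2 ∧ p.1 - p.2 ≤ c₁ + c₂
    · refine ⟨(p.2, p.1), swap_memX hp, Relation.EqvGen.rel _ _ (Or.inl rfl), ?_, ?_⟩ <;>
        · show _ ≤ _
          omega
    by_cases hc3 : c₁ + c₂ < p.1 - p.2
    · have hq0 : (p.2, 2 * c₁ + 2 * c₂ + 2 * p.2 - p.1) ∈ X c₁ c₂ := vieta_memX (swap_memX hp)
      have hstep : Relation.EqvGen (move c₁ c₂) p (p.2, 2 * c₁ + 2 * c₂ + 2 * p.2 - p.1) :=
        Relation.EqvGen.trans _ _ _ (Relation.EqvGen.rel _ _ (Or.inl rfl))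
          (Relation.EqvGen.rel _ _ (Or.inr rfl))
      have hmeas : ((p.2, 2 * c₁ + 2 * c₂ + 2 * p.2 - p.1).1 -
          (p.2, 2 * c₁ + 2 * c₂ + 2 * p.2 - p.1).2).natAbs ≤ n := by
        show (p.2 - (2 * c₁ + 2 * c₂ + 2 * p.2 - p.1)).natAbs ≤ n
        omega
      obtain ⟨q, hq, hpq, hb1, hb2⟩ := ih _ hq0 hmeas
      exact ⟨q, hq, Relation.EqvGen.trans _ _ _ hstep hpq, hb1, hb2⟩
    · have hq0 : ((2 * c₁ + 2 * c₂ + 2 * p.1 - p.2 : ℤ), p.1) ∈ X c₁ c₂ :=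
        swap_memX (vieta_memX hp)
      have hstep : Relation.EqvGen (move c₁ c₂) p (2 * c₁ + 2 * c₂ + 2 * p.1 - p.2, p.1) :=
        Relation.EqvGen.trans _ _ _ (Relation.EqvGen.rel _ _ (Or.inr rfl))
          (Relation.EqvGen.rel _ _ (Or.inl rfl))
      have hmeas : (((2 * c₁ + 2 * c₂ + 2 * p.1 - p.2 : ℤ), p.1).1 -
          ((2 * c₁ + 2 * c₂ + 2 * p.1 - p.2 : ℤ), p.1).2).natAbs ≤ n := by
        show ((2 * c₁ + 2 * c₂ + 2 * p.1 - p.2) - p.1).natAbs ≤ n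
        omega
      obtain ⟨q, hq, hpq, hb1, hb2⟩ := ih _ hq0 hmeas
      exact ⟨q, hq, Relation.EqvGen.trans _ _ _ hstep hpq, hb1, hb2⟩

private lemma invariant {c₁ c₂ : ℤ} {p q : ℤ × ℤ} (h : Relation.EqvGen (move c₁ c₂) p q) :
    ∃ k : ℤ, q.1 - q.2 = (p.1 - p.2) + 2 * (c₁ + c₂) * k ∨
      q.1 - q.2 = -(p.1 - p.2) + 2 * (c₁ + c₂) * k := by
  induction h with
  | rel a b hab =>
    rcases hab with h | h
    · refine ⟨0, Or.inr ?_⟩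
      rw [h]; show a.2 - a.1 = -(a.1 - a.2) + 2 * (c₁ + c₂) * 0; ring
    · refine ⟨-1, Or.inr ?_⟩
      rw [h]
      show a.1 - (2 * c₁ + 2 * c₂ + 2 * a.1 - a.2) = -(a.1 - a.2) + 2 * (c₁ + c₂) * (-1)
      ring
  | refl a => exact ⟨0, Or.inl (by ring)⟩
  | symm a b h ih =>
    obtain ⟨k, hk | hk⟩ := ih
    · exact ⟨-k, Or.inl (by linear_combination -hk)⟩
    · exact ⟨k, Or.inr (by linear_combination hk)⟩
  | trans a b c h₁ h₂ ih₁ ih₂ =>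
    obtain ⟨k₁, h1 | h1⟩ := ih₁ <;> obtain ⟨k₂, h2 | h2⟩ := ih₂
    · exact ⟨k₁ + k₂, Or.inl (by linear_combination h1 + h2)⟩
    · exact ⟨k₂ - k₁, Or.inr (by linear_combination h2 - h1)⟩
    · exact ⟨k₁ + k₂, Or.inr (by linear_combination h1 + h2)⟩
    · exact ⟨k₂ - k₁, Or.inl (by linear_combination h2 - h1)⟩

private lemma unique_rep {c₁ c₂ : ℤ} (hA : 0 < c₁ + c₂) {p q : ℤ × ℤ} (hp : p ∈ X c₁ c₂)
    (hq : q ∈ X c₁ c₂) (hp1 : -(c₁ + c₂) ≤ p.1 - p.2) (hp2 : p.1 - p.2 ≤ 0)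
    (hq1 : -(c₁ + c₂) ≤ q.1 - q.2) (hq2 : q.1 - q.2 ≤ 0)
    (h : Relation.EqvGen (move c₁ c₂) p q) : p = q := by
  obtain ⟨k, hk | hk⟩ := invariant h
  · have hk0 : k = 0 := by
      rcases lt_trichotomy k 0 with h' | h' | h'
      · exfalso
        have : 2 * (c₁ + c₂) * k ≤ 2 * (c₁ + c₂) * (-1) :=
          mul_le_mul_of_nonneg_left (by omega) (by linarith)
        linarith
      · exact h'
      · exfalso
        have : 2 * (c₁ + c₂) * 1 ≤ 2 * (c₁ + c₂) * k :=
          mul_le_mul_of_nonneg_left (by omega) (by linarith)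
        linarith
    apply X_inj hA hp hq
    rw [hk0] at hk; linarith
  · have hk0 : k = 0 ∨ k = -1 := by
      rcases lt_trichotomy k (-1) with h' | h' | h'
      · exfalso
        have : 2 * (c₁ + c₂) * k ≤ 2 * (c₁ + c₂) * (-2) :=
          mul_le_mul_of_nonneg_left (by omega) (by linarith)
        linarith
      · exact Or.inr h'
      · rcases lt_trichotomy k 0 with h'' | h'' | h''
        · omega
        · exact Or.inl h''
        · exfalso
          have : 2 * (c₁ + c₂) * 1 ≤ 2 * (c₁ + c₂) * k :=
            mul_le_mul_of_nonneg_left (by omega) (by linarith)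
          linarith
    apply X_inj hA hp hq
    rcases hk0 with h' | h' <;> rw [h'] at hk <;> linarith

/-! ### Arithmetic: primitivity transfers to the associated form -/

private lemma no_all_odd {c₁ c₂ a b : ℤ}
    (h : (c₁ + c₂ + a + b) ^ 2 = 2 * (c₁ ^ 2 + c₂ ^ 2 + a ^ 2 + b ^ 2))
    (h1 : Odd c₁) (h2 : Odd c₂) (h3 : Odd a) (h4 : Odd b) : False := by
  obtain ⟨x, rfl⟩ := h1
  obtain ⟨y, rfl⟩ := h2
  obtain ⟨z, rfl⟩ := h3
  obtain ⟨w, rfl⟩ := h4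
  have key : (x + y + z + w + 2) ^ 2 =
      2 * (x ^ 2 + x + y ^ 2 + y + z ^ 2 + z + w ^ 2 + w) + 2 := by
    have h4' : (4:ℤ) * ((x + y + z + w + 2) ^ 2) =
        4 * (2 * (x ^ 2 + x + y ^ 2 + y + z ^ 2 + z + w ^ 2 + w) + 2) := by
      linear_combination h
    exact mul_left_cancel₀ (by norm_num : (4:ℤ) ≠ 0) h4'
  have eK : Even (x ^ 2 + x + y ^ 2 + y + z ^ 2 + z + w ^ 2 + w) := by
    obtain ⟨m1, hm1⟩ := Int.even_mul_succ_self x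
    obtain ⟨m2, hm2⟩ := Int.even_mul_succ_self y
    obtain ⟨m3, hm3⟩ := Int.even_mul_succ_self z
    obtain ⟨m4, hm4⟩ := Int.even_mul_succ_self w
    exact ⟨m1 + m2 + m3 + m4, by linear_combination hm1 + hm2 + hm3 + hm4⟩
  obtain ⟨m, hm⟩ := eK
  have h2' : (x + y + z + w + 2) ^ 2 = 4 * m + 2 := by rw [key, hm]; ring
  rcases Int.even_or_odd (x + y + z + w + 2) with ⟨t, ht⟩ | ⟨t, ht⟩
  · rw [ht] at h2'
    have hc : 2 * (2 * t ^ 2) = 2 * (2 * m + 1) := by linear_combination h2'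
    have hc2 : 2 * t ^ 2 = 2 * m + 1 := mul_left_cancel₀ (by norm_num : (2:ℤ) ≠ 0) hc
    generalize t ^ 2 = T at hc2
    omega
  · rw [ht] at h2'
    have hc : 4 * t ^ 2 + 4 * t + 1 = 4 * m + 2 := by linear_combination h2'
    generalize t ^ 2 = T at hc
    omega

private lemma gcd_ABC {c₁ c₂ a b : ℤ}
    (heq : (c₁ + c₂ + a + b) ^ 2 = 2 * (c₁ ^ 2 + c₂ ^ 2 + a ^ 2 + b ^ 2))
    (hg : Int.gcd (Int.gcd (Int.gcd c₁ c₂ : ℤ) a : ℤ) b = 1) :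
    Int.gcd (Int.gcd (c₁ + c₂) (c₁ + c₂ + a - b) : ℤ) (c₁ + a) = 1 := by
  by_contra hne
  obtain ⟨P, hP, hPdvd⟩ := Nat.exists_prime_and_dvd hne
  have hPA : (P:ℤ) ∣ (c₁ + c₂) := (Int.natCast_dvd_natCast.mpr hPdvd).trans g3_dvd_x
  have hPB : (P:ℤ) ∣ (c₁ + c₂ + a - b) := (Int.natCast_dvd_natCast.mpr hPdvd).trans g3_dvd_y
  have hPC : (P:ℤ) ∣ (c₁ + a) := (Int.natCast_dvd_natCast.mpr hPdvd).trans g3_dvd_z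
  have heq2 : (c₁ + c₂ + a - b) ^ 2 - 4 * (c₁ + c₂) * (c₁ + a) = -4 * c₁ ^ 2 := by
    linear_combination -heq
  have hP4 : (P:ℤ) ∣ 4 * c₁ ^ 2 := by
    have h5 : (4:ℤ) * c₁ ^ 2 = 4 * (c₁ + c₂) * (c₁ + a) - (c₁ + c₂ + a - b) ^ 2 := by
      linarith
    rw [h5]
    exact dvd_sub ((hPA.mul_left 4).mul_right (c₁ + a)) (dvd_pow hPB two_ne_zero)
  by_cases hP2 : P = 2
  · subst hP2
    have h2A : (2:ℤ) ∣ c₁ + c₂ := by exact_mod_cast hPA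
    have h2B : (2:ℤ) ∣ c₁ + c₂ + a - b := by exact_mod_cast hPB
    have h2C : (2:ℤ) ∣ c₁ + a := by exact_mod_cast hPC
    rcases Int.even_or_odd c₁ with he | ho
    · obtain ⟨s, hs⟩ := he
      have d1 : (2:ℤ) ∣ c₁ := ⟨s, by linarith⟩
      have d2 : (2:ℤ) ∣ c₂ := by omega
      have d3 : (2:ℤ) ∣ a := by omega
      have d4 : (2:ℤ) ∣ b := by omega
      have hdvd : (2:ℤ) ∣ ((Int.gcd (Int.gcd (Int.gcd c₁ c₂ : ℤ) a : ℤ) b : ℤ)) :=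
        dvd_g4 d1 d2 d3 d4
      rw [hg] at hdvd
      norm_num at hdvd
    · have hc1 : c₁ % 2 = 1 := Int.odd_iff.mp ho
      have oc₂ : Odd c₂ := Int.odd_iff.mpr (by omega)
      have oa : Odd a := Int.odd_iff.mpr (by omega)
      have ob : Odd b := Int.odd_iff.mpr (by omega)
      exact no_all_odd heq ho oc₂ oa ob
  · have hPp : Prime (P:ℤ) := Nat.prime_iff_prime_int.mp hP
    rcases hPp.dvd_mul.mp hP4 with h4 | hc
    · have h4' : P ∣ 4 := by exact_mod_cast h4
      have : P ∣ 2 := hP.dvd_of_dvd_pow (n := 2) (by norm_num [h4'])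
      exact hP2 ((Nat.prime_dvd_prime_iff_eq hP Nat.prime_two).mp this)
    · have hPc₁ : (P:ℤ) ∣ c₁ := hPp.dvd_of_dvd_pow hc
      have hPc₂ : (P:ℤ) ∣ c₂ := by
        have h' := hPA.sub hPc₁
        rwa [show c₁ + c₂ - c₁ = c₂ from by ring] at h'
      have hPa : (P:ℤ) ∣ a := by
        have h' := hPC.sub hPc₁
        rwa [show c₁ + a - c₁ = a from by ring] at h'
      have hPb : (P:ℤ) ∣ b := by
        have h' := (hPA.add hPa).sub hPB
        rwa [show c₁ + c₂ + a - (c₁ + c₂ + a - b) = b from by ring] at h'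
      have hdvd : (P:ℤ) ∣ ((Int.gcd (Int.gcd (Int.gcd c₁ c₂ : ℤ) a : ℤ) b : ℤ)) :=
        dvd_g4 hPc₁ hPc₂ hPa hPb
      rw [hg] at hdvd
      have : P ∣ 1 := by exact_mod_cast hdvd
      exact hP.one_lt.ne' (Nat.dvd_one.mp this)

private lemma gcd_back {c₁ c₂ B C : ℤ}
    (hg : Int.gcd (Int.gcd (c₁ + c₂) B : ℤ) C = 1) :
    Int.gcd (Int.gcd (Int.gcd c₁ c₂ : ℤ) (C - c₁) : ℤ) (C + c₂ - B) = 1 := by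
  have h1 : ((Int.gcd (Int.gcd (Int.gcd c₁ c₂ : ℤ) (C - c₁) : ℤ) (C + c₂ - B) : ℤ)) ∣
      (c₁ + c₂) := g4_dvd_x.add g4_dvd_y
  have h2 : ((Int.gcd (Int.gcd (Int.gcd c₁ c₂ : ℤ) (C - c₁) : ℤ) (C + c₂ - B) : ℤ)) ∣ C := by
    have h' := g4_dvd_z.add (g4_dvd_x (x := c₁) (y := c₂) (z := C - c₁) (w := C + c₂ - B))
    rwa [show C - c₁ + c₁ = C from by ring] at h'
  have h3 : ((Int.gcd (Int.gcd (Int.gcd c₁ c₂ : ℤ) (C - c₁) : ℤ) (C + c₂ - B) : ℤ)) ∣ B := by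
    have h' := (h2.add g4_dvd_y).sub g4_dvd_w
    rwa [show C + c₂ - (C + c₂ - B) = B from by ring] at h'
  have hdvd : ((Int.gcd (Int.gcd (Int.gcd c₁ c₂ : ℤ) (C - c₁) : ℤ) (C + c₂ - B) : ℤ)) ∣
      ((Int.gcd (Int.gcd (c₁ + c₂) B : ℤ) C : ℤ)) :=
    Int.dvd_coe_gcd (Int.dvd_coe_gcd h1 h3) h2
  rw [hg] at hdvd
  have : Int.gcd (Int.gcd (Int.gcd c₁ c₂ : ℤ) (C - c₁) : ℤ) (C + c₂ - B) ∣ 1 := by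
    exact_mod_cast hdvd
  exact Nat.dvd_one.mp this

/-! ### The reduced set and the map to forms -/

private def Rset (c₁ c₂ : ℤ) : Set (ℤ × ℤ) :=
  {p | p ∈ X c₁ c₂ ∧ -(c₁ + c₂) ≤ p.1 - p.2 ∧ p.1 - p.2 ≤ 0}

private def fmap (c₁ c₂ : ℤ) (p : ℤ × ℤ) : ℤ × ℤ :=
  (c₁ + c₂ + p.1 - p.2, c₁ + p.1)

/-- The tangency number `T(c₁,c₂)`: the number of equivalence classes of `X`
equals the number of reduced representatives `(B,C)` with `B² − 4AC = −4c₁²`,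
`gcd(A,B,C) = 1`, `0 ≤ B ≤ A`, where `A = c₁ + c₂ > 0`. -/
theorem tangency_number_count (c₁ c₂ : ℤ) (hA : 0 < c₁ + c₂) :
    (classes c₁ c₂).ncard =
      Set.ncard {bc : ℤ × ℤ |
        bc.1 ^ 2 - 4 * (c₁ + c₂) * bc.2 = -4 * c₁ ^ 2 ∧
        Int.gcd (Int.gcd (c₁ + c₂) bc.1 : ℤ) bc.2 = 1 ∧
        0 ≤ bc.1 ∧ bc.1 ≤ c₁ + c₂} := by
  classical
  have hclasses : classes c₁ c₂ =
      (fun p => {q ∈ X c₁ c₂ | Relation.EqvGen (move c₁ c₂) p q}) '' (Rset c₁ c₂) := by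
    ext C
    constructor
    · rintro ⟨p, hp, rfl⟩
      obtain ⟨q, hq, hpq, hb1, hb2⟩ := reach hA _ p hp le_rfl
      refine ⟨q, ⟨hq, hb1, hb2⟩, ?_⟩
      ext r
      constructor
      · rintro ⟨hr, h⟩
        exact ⟨hr, Relation.EqvGen.trans _ _ _ hpq h⟩
      · rintro ⟨hr, h⟩
        exact ⟨hr, Relation.EqvGen.trans _ _ _ (Relation.EqvGen.symm _ _ hpq) h⟩
    · rintro ⟨p, hp, rfl⟩
      exact ⟨p, hp.1, rfl⟩
  have hinj1 : Set.InjOn (fun p => {q ∈ X c₁ c₂ | Relation.EqvGen (move c₁ c₂) p q})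
      (Rset c₁ c₂) := by
    rintro p hp q hq h
    have h' : {r ∈ X c₁ c₂ | Relation.EqvGen (move c₁ c₂) p r} =
        {r ∈ X c₁ c₂ | Relation.EqvGen (move c₁ c₂) q r} := h
    have hpmem : p ∈ {r ∈ X c₁ c₂ | Relation.EqvGen (move c₁ c₂) q r} := by
      rw [← h']
      exact ⟨hp.1, Relation.EqvGen.refl p⟩
    exact (unique_rep hA hq.1 hp.1 hq.2.1 hq.2.2 hp.2.1 hp.2.2 hpmem.2).symm
  have himg : {bc : ℤ × ℤ |
      bc.1 ^ 2 - 4 * (c₁ + c₂) * bc.2 = -4 * c₁ ^ 2 ∧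
      Int.gcd (Int.gcd (c₁ + c₂) bc.1 : ℤ) bc.2 = 1 ∧
      0 ≤ bc.1 ∧ bc.1 ≤ c₁ + c₂} = (fmap c₁ c₂) '' (Rset c₁ c₂) := by
    ext bc
    simp only [Set.mem_setOf_eq, Set.mem_image]
    constructor
    · rintro ⟨heqn, hgcd, hb0, hbA⟩
      refine ⟨(bc.2 - c₁, bc.2 + c₂ - bc.1), ⟨⟨?_, ?_⟩, ?_, ?_⟩, ?_⟩
      · show (c₁ + c₂ + (bc.2 - c₁) + (bc.2 + c₂ - bc.1)) ^ 2 =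
          2 * (c₁ ^ 2 + c₂ ^ 2 + (bc.2 - c₁) ^ 2 + (bc.2 + c₂ - bc.1) ^ 2)
        linear_combination -heqn
      · exact gcd_back hgcd
      · show -(c₁ + c₂) ≤ (bc.2 - c₁) - (bc.2 + c₂ - bc.1)
        omega
      · show (bc.2 - c₁) - (bc.2 + c₂ - bc.1) ≤ 0
        omega
      · refine Prod.ext ?_ ?_
        · show c₁ + c₂ + (bc.2 - c₁) - (bc.2 + c₂ - bc.1) = bc.1
          ring
        · show c₁ + (bc.2 - c₁) = bc.2
          ring
    · rintro ⟨p, ⟨⟨heq, hgcd⟩, hb1, hb2⟩, rfl⟩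
      refine ⟨?_, ?_, ?_, ?_⟩
      · show (c₁ + c₂ + p.1 - p.2) ^ 2 - 4 * (c₁ + c₂) * (c₁ + p.1) = -4 * c₁ ^ 2
        linear_combination -heq
      · exact gcd_ABC heq hgcd
      · show 0 ≤ c₁ + c₂ + p.1 - p.2
        omega
      · show c₁ + c₂ + p.1 - p.2 ≤ c₁ + c₂
        omega
  have hinj2 : Set.InjOn (fmap c₁ c₂) (Rset c₁ c₂) := by
    rintro p _ q _ h
    have e1 : c₁ + c₂ + p.1 - p.2 = c₁ + c₂ + q.1 - q.2 := congrArg Prod.fst h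
    have e2 : c₁ + p.1 = c₁ + q.1 := congrArg Prod.snd h
    exact Prod.ext (by omega) (by omega)
  rw [hclasses, Set.ncard_image_of_injOn hinj1, himg, Set.ncard_image_of_injOn hinj2]
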